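/- Let A = {a_1, ..., a_n} and let S_1^n = { XX : X a nonempty word over A } be the set of squares. Define words by X_1 = a_1 and X_i = X_{i-1} a_i X_{i-1}. Then X_n has length 2^n - 1, is square-free (contains no factor of the form XX with X nonempty), and for every letter a_i in A, the word X_n a_i contains a square factor. Hence X_n is a crucial word with respect to S_1^n. -/
import Mathlib


/-- `Xw 0 = []`, `Xw (i+1) = Xw i ++ [a_{i+1}] ++ Xw i`, where the letter
`a_{i+1}` is represented by the natural number `i`. -/
def Xw : ℕ → List ℕ
  | 0 => []
  | i + 1 => Xw i ++ [i] ++ Xw i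

lemma Xw_length (n : ℕ) : (Xw n).length = 2 ^ n - 1 := by
  induction n with
  | zero => simp [Xw]
  | succ n ih =>
    have h1 : 1 ≤ 2 ^ n := Nat.one_le_two_pow
    have h2 : 2 ^ (n + 1) = 2 * 2 ^ n := by ring
    simp [Xw, ih]
    omega

lemma Xw_mem {n x : ℕ} (h : x ∈ Xw n) : x < n := by
  induction n with
  | zero => simp [Xw] at h
  | succ n ih =>
    simp only [Xw, List.mem_append, List.mem_singleton] at h
    rcases h with (h | h) | h
    · exact Nat.lt_succ_of_lt (ih h)
    · omega
    · exact Nat.lt_succ_of_lt (ih h)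

lemma Xw_count (n : ℕ) : (Xw (n + 1)).count n = 1 := by
  have h : (Xw n).count n = 0 :=
    List.count_eq_zero_of_not_mem (fun h => lt_irrefl n (Xw_mem h))
  simp [Xw, List.count_append, h]

lemma Xw_suffix {m n : ℕ} (h : m ≤ n) : Xw m <:+ Xw n := by
  induction n with
  | zero => interval_cases m; exact List.suffix_refl _
  | succ n ih =>
    rcases Nat.lt_or_ge m (n + 1) with h' | h'
    · exact (ih (Nat.lt_succ_iff.mp h')).trans ⟨Xw n ++ [n], by simp [Xw]⟩
    · have : m = n + 1 := le_antisymm h h'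
      subst this; exact List.suffix_refl _

lemma infix_split {α : Type*} {w L L' : List α} {c : α}
    (h : w <:+: (L ++ c :: L')) (hc : c ∉ w) : w <:+: L ∨ w <:+: L' := by
  obtain ⟨s, t, h⟩ := h
  have e : s ++ (w ++ t) = L ++ c :: L' := by rw [← List.append_assoc]; exact h
  by_cases hA : s.length + w.length ≤ L.length
  · left
    have hL : L = (s ++ (w ++ t)).take L.length := by rw [e]; simp
    rw [List.take_append,
      List.take_of_length_le (by omega),
      List.take_append,
      List.take_of_length_le (by omega)] at hL
    exact ⟨s, t.take (L.length - s.length - w.length), by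
      rw [List.append_assoc]; exact hL.symm⟩
  · by_cases hB : L.length + 1 ≤ s.length
    · right
      have hL : L' = (s ++ (w ++ t)).drop (L.length + 1) := by rw [e]; simp
      rw [List.drop_append,
        Nat.sub_eq_zero_of_le (by omega), List.drop_zero] at hL
      exact ⟨s.drop (L.length + 1), t, by rw [List.append_assoc]; exact hL.symm⟩
    · exfalso
      push_neg at hA hB
      have hs : s.length ≤ L.length := by omega
      have hk : L.length - s.length < w.length := by omega
      have hlen : L.length < (L ++ c :: L').length := by simp
      have h1 : (L ++ c :: L')[L.length]'hlen = c := by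
        rw [List.getElem_append_right (le_refl _)]
        simp
      have hlen2 : L.length < (s ++ (w ++ t)).length := by rw [e]; exact hlen
      have key : (s ++ (w ++ t))[L.length]'hlen2 = c :=
        (List.getElem_of_eq e hlen2).trans h1
      rw [List.getElem_append_right hs, List.getElem_append_left hk] at key
      exact hc (key ▸ List.getElem_mem hk)

lemma Xw_squarefree (n : ℕ) : ∀ X : List ℕ, X ≠ [] → ¬ (X ++ X) <:+: Xw n := by
  induction n with
  | zero =>
    intro X hX h
    rw [Xw, List.infix_nil, List.append_eq_nil_iff] at h
    exact hX h.1
  | succ n ih =>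
    intro X hX h
    have heq : Xw (n + 1) = Xw n ++ n :: Xw n := by
      rw [Xw, List.append_assoc, List.singleton_append]
    rw [heq] at h
    by_cases hn : n ∈ X
    · have hcount : (Xw (n + 1)).count n = 1 := Xw_count n
      have hsub : List.Sublist (X ++ X) (Xw (n + 1)) := by
        rw [heq]; exact h.sublist
      have hle : (X ++ X).count n ≤ (Xw (n + 1)).count n := hsub.count_le n
      rw [hcount, List.count_append] at hle
      have : 1 ≤ X.count n := List.one_le_count_iff.mpr hn
      omega
    · have hc : n ∉ X ++ X := by simp [hn]
      rcases infix_split h hc with h' | h' <;> exact ih X hX h'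

/-- The word `X_n` has length `2^n - 1`, is a word over the `n`-letter alphabet
`{0, …, n-1}`, is square-free, and appending any letter of the alphabet
creates a square factor; hence `X_n` is crucial w.r.t. the set of squares. -/
theorem Xw_crucial (n : ℕ) :
    (Xw n).length = 2 ^ n - 1 ∧
    (∀ x ∈ Xw n, x < n) ∧
    (∀ X : List ℕ, X ≠ [] → ¬ (X ++ X) <:+: Xw n) ∧
    (∀ i, i < n → ∃ X : List ℕ, X ≠ [] ∧ (X ++ X) <:+: (Xw n ++ [i])) := by
  refine ⟨Xw_length n, fun x hx => Xw_mem hx, Xw_squarefree n, ?_⟩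
  intro i hi
  refine ⟨Xw i ++ [i], by simp, ?_⟩
  obtain ⟨p, hp⟩ := Xw_suffix hi
  refine List.IsSuffix.isInfix ⟨p, ?_⟩
  rw [← List.append_assoc, ← hp, Xw]
  simp [List.append_assoc]
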